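/- arXiv:2011.03439 — 3 statements merged into one kernel-verified Lean document; each statement's English description precedes it below -/
import Mathlib

section
/- Every natural number m > 0 has an Ackermann normal form: there exist k, a strictly decreasing sequence b_{k-1} < ... < b_0 of natural numbers, and natural numbers n_0, ..., n_{k-1} such that m = F_{b_{k-1}}^{1+n_{k-1}} ∘ ... ∘ F_{b_0}^{1+n_0}(1) and for each i < k, n_i < F_{b_{i-1}}^{1+n_{i-1}} ∘ ... ∘ F_{b_0}^{1+n_0}(1). -/
/-- The fast-growing hierarchy: `F 0 n = n + 1` and `F (b+1) n = (F b)^[1+n] n`. -/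
def F : ℕ → ℕ → ℕ
  | 0, n => n + 1
  | b + 1, n => (F b)^[1 + n] n

/-- `evalANF [(b₀,n₀),…,(b_{k-1},n_{k-1})] = F_{b_{k-1}}^[1+n_{k-1}] ∘ ⋯ ∘ F_{b₀}^[1+n₀] (1)`:
the list records the innermost pair first. -/
def evalANF (l : List (ℕ × ℕ)) : ℕ :=
  l.foldl (fun m p => (F p.1)^[1 + p.2] m) 1

/-- `l` is an Ackermann normal form: the indices `b_{k-1} < ⋯ < b₀` are strictly decreasing
along the list (which starts with the innermost pair `(b₀,n₀)`), and each exponent `n_i`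
is smaller than the value of the composition of the earlier (inner) pairs applied to `1`. -/
def IsANF (l : List (ℕ × ℕ)) : Prop :=
  l.Chain' (fun p q => q.1 < p.1) ∧
  ∀ i (h : i < l.length), (l.get ⟨i, h⟩).2 < evalANF (l.take i)

lemma self_lt_F : ∀ (b n : ℕ), n < F b n := by
  intro b
  induction b with
  | zero => intro n; simp [F]
  | succ b ih =>
    have hle : ∀ (k n : ℕ), n ≤ (F b)^[k] n := by
      intro k
      induction k with
      | zero => intro n; simp
      | succ k ihk =>
        intro n
        rw [Function.iterate_succ_apply']
        exact le_trans (ihk n) (le_of_lt (ih _))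
    intro n
    show n < (F b)^[1 + n] n
    calc n ≤ (F b)^[n] n := hle n n
      _ < F b ((F b)^[n] n) := ih _
      _ = (F b)^[1 + n] n := by rw [Nat.add_comm, Function.iterate_succ_apply']

lemma le_iterF (b k n : ℕ) : n ≤ (F b)^[k] n := by
  induction k with
  | zero => simp
  | succ k ih =>
    rw [Function.iterate_succ_apply']
    exact le_trans ih (le_of_lt (self_lt_F b _))

lemma F0_iter (k n : ℕ) : (F 0)^[k] n = n + k := by
  induction k with
  | zero => simp
  | succ k ih =>
    rw [Function.iterate_succ_apply', ih]
    show n + k + 1 = n + (k + 1)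
    omega

lemma evalANF_append (l : List (ℕ × ℕ)) (p : ℕ × ℕ) :
    evalANF (l ++ [p]) = (F p.1)^[1 + p.2] (evalANF l) := by
  simp [evalANF, List.foldl_append]

lemma isANF_append (l : List (ℕ × ℕ)) (c j : ℕ) (hl : IsANF l)
    (hc : ∀ p ∈ l, c < p.1) (hj : j < evalANF l) : IsANF (l ++ [(c, j)]) := by
  constructor
  · rw [List.Chain', List.isChain_append]
    refine ⟨hl.1, List.isChain_singleton _, ?_⟩
    intro x hx y hy
    simp only [List.head?_cons, Option.mem_some_iff] at hy
    subst hy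
    exact hc x (List.mem_of_mem_getLast? hx)
  · intro i hi
    have hi2 : i < l.length + 1 := by simpa using hi
    rcases Nat.lt_or_ge i l.length with h | h
    · have hget : ((l ++ [(c, j)]).get ⟨i, hi⟩) = l.get ⟨i, h⟩ := by
        simp [List.getElem_append_left h]
      have htake : (l ++ [(c, j)]).take i = l.take i := by
        rw [List.take_append, Nat.sub_eq_zero_of_le (le_of_lt h)]
        simp
      rw [hget, htake]
      exact hl.2 i h
    · have hil : i = l.length := by omega
      subst hil
      have hget : ((l ++ [(c, j)]).get ⟨l.length, hi⟩) = (c, j) := by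
        simp [List.getElem_append_right]
      have htake : (l ++ [(c, j)]).take l.length = l := List.take_left
      rw [hget, htake]
      exact hj

lemma key : ∀ (b : ℕ) (l : List (ℕ × ℕ)) (m : ℕ), IsANF l → (∀ p ∈ l, b < p.1) →
    evalANF l ≤ m → m < F (b + 1) (evalANF l) →
    ∃ l', IsANF l' ∧ evalANF l' = m := by
  intro b
  induction b with
  | zero =>
    intro l m hANF hidx hle hlt
    set v := evalANF l with hv
    have hF1 : F 1 v = 2 * v + 1 := by
      show (F 0)^[1 + v] v = _
      rw [F0_iter]; omega
    rw [hF1] at hlt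
    rcases eq_or_lt_of_le hle with h | h
    · exact ⟨l, hANF, h⟩
    · refine ⟨l ++ [(0, m - v - 1)], isANF_append l 0 _ hANF hidx (by omega), ?_⟩
      rw [evalANF_append]
      show (F 0)^[1 + (m - v - 1)] v = m
      rw [F0_iter]; omega
  | succ b ih =>
    intro l m hANF hidx hle hlt
    set v := evalANF l with hv
    have hP : m < (F (b + 1))^[v + 1] v := by
      have h2 : F (b + 1 + 1) v = (F (b + 1))^[1 + v] v := rfl
      rw [h2, Nat.add_comm 1 v] at hlt
      exact hlt
    have hex : ∃ n, m < (F (b + 1))^[n + 1] v := ⟨v, hP⟩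
    set n := Nat.find hex with hn
    have hfind : m < (F (b + 1))^[n + 1] v := Nat.find_spec hex
    have hnv : n ≤ v := Nat.find_min' hex hP
    match hne : n with
    | 0 =>
      apply ih l m hANF (fun p hp => Nat.lt_of_succ_lt (hidx p hp)) hle
      show m < F (b + 1) v
      simpa using hfind
    | j + 1 =>
      have hj : ¬ m < (F (b + 1))^[j + 1] v := Nat.find_min hex (by omega)
      have hj' : (F (b + 1))^[j + 1] v ≤ m := Nat.le_of_not_lt hj
      have hjv : j < v := by omega
      set l' := l ++ [(b + 1, j)] with hl'
      have hval : evalANF l' = (F (b + 1))^[j + 1] v := by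
        rw [hl', evalANF_append]
        simp [Nat.add_comm, hv]
      apply ih l' m
      · exact isANF_append l (b + 1) j hANF hidx hjv
      · intro p hp
        rw [hl', List.mem_append] at hp
        rcases hp with hp | hp
        · exact Nat.lt_of_succ_lt (hidx p hp)
        · simp at hp; subst hp; omega
      · rw [hval]; exact hj'
      · rw [hval]
        rw [← Function.iterate_succ_apply' (F (b + 1)) (j + 1) v]
        exact hfind

theorem exists_ackermannNormalForm (m : ℕ) (hm : 0 < m) :
    ∃ l : List (ℕ × ℕ), IsANF l ∧ evalANF l = m := by
  have hbase : IsANF [] := ⟨List.isChain_nil, by intro i h; simp at h⟩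
  have h1 : evalANF ([] : List (ℕ × ℕ)) = 1 := rfl
  have hgrow : ∀ b, b + 2 ≤ F b 1 := by
    intro b
    induction b with
    | zero => simp [F]
    | succ b ih =>
      have : F b 1 < F b (F b 1) := self_lt_F b _
      have h2 : F b (F b 1) ≤ F (b + 1) 1 := by
        show F b (F b 1) ≤ (F b)^[1 + 1] 1
        rw [Function.iterate_succ_apply', Function.iterate_succ_apply]
        simp
      omega
  apply key m [] m hbase (by simp) (by rw [h1]; omega)
  rw [h1]
  have := hgrow (m + 1)
  calc m < m + 3 := by omega
    _ ≤ F (m + 1) 1 := this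
end

section
/- The Ackermann normal form of a positive natural number is unique: if m = F_{b_{k-1}}^{1+n_{k-1}} ∘ ... ∘ F_{b_0}^{1+n_0}(1) and m = F_{b'_{l-1}}^{1+n'_{l-1}} ∘ ... ∘ F_{b'_0}^{1+n'_0}(1) are both Ackermann normal forms, then k = l and (b_i, n_i) = (b'_i, n'_i) for all i < k. -/
lemma le_iter {f : ℕ → ℕ} (hf : ∀ x, x ≤ f x) (k x : ℕ) : x ≤ f^[k] x := by
  induction k with
  | zero => simp
  | succ k ih => rw [Function.iterate_succ_apply']; exact le_trans ih (hf _)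

lemma iter_le_iter {f : ℕ → ℕ} (hf : ∀ x, x ≤ f x) (x : ℕ) {i j : ℕ} (h : i ≤ j) :
    f^[i] x ≤ f^[j] x := by
  obtain ⟨k, rfl⟩ := Nat.exists_eq_add_of_le h
  rw [Nat.add_comm, Function.iterate_add_apply]
  exact le_iter hf k _

lemma lt_iter {f : ℕ → ℕ} (hf : ∀ x, x < f x) (k x : ℕ) : x < f^[k + 1] x := by
  induction k with
  | zero => simpa using hf x
  | succ k ih => rw [Function.iterate_succ_apply']; exact lt_trans ih (hf _)

lemma iter_lt_iter {f : ℕ → ℕ} (hf : ∀ x, x < f x) (x : ℕ) {i j : ℕ} (h : i < j) :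
    f^[i] x < f^[j] x := by
  obtain ⟨k, rfl⟩ : ∃ k, j = i + (k + 1) := ⟨j - i - 1, by omega⟩
  rw [Nat.add_comm, Function.iterate_add_apply]
  exact lt_iter hf k _

lemma lt_F : ∀ b n, n < F b n
  | 0, n => by simp [F]
  | b + 1, n => by
    show n < (F b)^[1 + n] n
    rw [Nat.add_comm]
    exact lt_iter (lt_F b) n n

lemma F_strictMono : ∀ b, StrictMono (F b)
  | 0 => fun n m h => by simpa [F] using h
  | b + 1 => by
    intro n m h
    show (F b)^[1 + n] n < (F b)^[1 + m] m
    calc (F b)^[1 + n] n < (F b)^[1 + n] m := ((F_strictMono b).iterate (1 + n)) h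
      _ ≤ (F b)^[1 + m] m := iter_le_iter (fun x => (lt_F b x).le) m (by omega)

lemma F_succ (b n : ℕ) : F (b + 1) n = (F b)^[1 + n] n := rfl

lemma lt_iter' (b k x : ℕ) : x < (F b)^[1 + k] x := by
  rw [Nat.add_comm]; exact lt_iter (lt_F b) k x

lemma F_le_iter (b k u : ℕ) (h : 1 ≤ k) : F b u ≤ (F b)^[k] u := by
  calc F b u = (F b)^[1] u := by simp
    _ ≤ (F b)^[k] u := iter_le_iter (fun x => (lt_F b x).le) u h

lemma F_le_succ (b n : ℕ) : F b n ≤ F (b + 1) n := by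
  rw [F_succ]; exact F_le_iter b (1 + n) n (by omega)

lemma F_base_mono {b c : ℕ} (h : b ≤ c) (n : ℕ) : F b n ≤ F c n :=
  monotone_nat_of_le_succ (fun b => F_le_succ b n) h

lemma iter_lt_F_succ {b n u : ℕ} (h : 1 + n ≤ u) : (F b)^[1 + n] u < F (b + 1) u := by
  rw [F_succ]
  exact iter_lt_iter (lt_F b) u (by omega)

/-- `InS c m`: `m` is the value of an Ackermann-normal-form whose indices are all `≥ c`. -/
inductive InS : ℕ → ℕ → Prop
  | one (c : ℕ) : InS c 1
  | step {c d n u : ℕ} (hcd : c ≤ d) (hu : InS (d + 1) u) (hn : n < u) :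
      InS c ((F d)^[1 + n] u)

lemma InS.pos {c m : ℕ} (h : InS c m) : 1 ≤ m := by
  induction h with
  | one => exact le_refl 1
  | step hcd hu hn ih => exact le_trans ih (le_iter (fun x => (lt_F _ x).le) _ _)

/-- The gap lemma: if `v < w` are values of nonempty normal forms with outermost indices
`e` and `d` respectively, then `F (min d e) v ≤ w`. -/
lemma gap : ∀ N d e n p u t v w : ℕ, v + w ≤ N →
    InS (d + 1) u → InS (e + 1) t → n < u → p < t →
    v = (F e)^[1 + p] t → w = (F d)^[1 + n] u → v < w →
    F (min d e) v ≤ w := by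
  intro N
  induction N with
  | zero =>
    intro d e n p u t v w hN hu ht hn hp hv hw hvw
    have h1 := ht.pos
    have h2 : t < v := hv ▸ lt_iter' e p t
    omega
  | succ N ih =>
    intro d e n p u t v w hN hu ht hn hp hv hw hvw
    have hu1 := hu.pos
    have ht1 := ht.pos
    have hwu : u < w := hw ▸ lt_iter' d n u
    have hvt : t < v := hv ▸ lt_iter' e p t
    rcases le_or_gt d e with hde | hed
    · rw [min_eq_left hde]
      rcases le_or_gt v u with hvu | huv
      · calc F d v ≤ F d u := (F_strictMono d).monotone hvu
          _ ≤ (F d)^[1 + n] u := F_le_iter d (1 + n) u (by omega)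
          _ = w := hw.symm
      · -- u < v : always contradictory or handled below
        cases hu with
        | one =>
          exfalso
          have hn0 : n = 0 := by omega
          have hw1 : w = F d 1 := by rw [hw, hn0]; simp
          have h2 : F d 1 ≤ v := by
            calc F d 1 ≤ F e 1 := F_base_mono hde 1
              _ ≤ F e t := (F_strictMono e).monotone ht1
              _ ≤ (F e)^[1 + p] t := F_le_iter e (1 + p) t (by omega)
              _ = v := hv.symm
          omega
        | step hdf hs hq =>
          rename_i f q s
          -- now u = (F f)^[1+q] s, hdf : d + 1 ≤ f
          rcases eq_or_lt_of_le hde with heq | hlt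
          · -- d = e
            subst heq
            rcases lt_trichotomy t ((F f)^[1 + q] s) with htu | htu | htu
            · -- t < u : contradiction with u < v
              exfalso
              cases ht with
              | one =>
                -- t = 1, p = 0, v = F d 1 but u ≥ F (d+1) 1 > F d 1
                have hp0 : p = 0 := by omega
                have hv1 : v = F d 1 := by rw [hv, hp0]; simp
                have h3 : F d 1 < F (d + 1) 1 := by
                  have := iter_lt_iter (lt_F d) 1 (show 1 < 1 + 1 by omega)
                  simpa [F_succ] using this
                have h4 : F (d + 1) 1 ≤ (F f)^[1 + q] s := by
                  calc F (d + 1) 1 ≤ F f 1 := F_base_mono hdf 1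
                    _ ≤ F f s := (F_strictMono f).monotone hs.pos
                    _ ≤ (F f)^[1 + q] s := F_le_iter f (1 + q) s (by omega)
                omega
              | step hdg hs' hr =>
                rename_i g r s'
                -- t = (F g)^[1+r] s', hdg : d + 1 ≤ g.  IH on (t, u):
                have hIH := ih f g q r s s' ((F g)^[1 + r] s') ((F f)^[1 + q] s)
                  (by omega) hs hs' hq hr rfl rfl htu
                have h5 : F (d + 1) ((F g)^[1 + r] s') ≤ (F f)^[1 + q] s :=
                  le_trans (F_base_mono (le_min hdf hdg) _) hIH
                have h6 : v < F (d + 1) ((F g)^[1 + r] s') := by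
                  rw [hv]; exact iter_lt_F_succ (by omega)
                omega
            · -- t = u : compare exponents
              rw [hv, htu]
              have hpn : 1 + p < 1 + n := by
                by_contra hcon
                have hle : w ≤ v := by
                  rw [hw, hv, htu]
                  exact iter_le_iter (fun x => (lt_F d x).le) _ (by omega)
                omega
              calc F d ((F d)^[1 + p] ((F f)^[1 + q] s))
                  = (F d)^[1 + p + 1] ((F f)^[1 + q] s) := (Function.iterate_succ_apply' _ _ _).symm
                _ ≤ (F d)^[1 + n] ((F f)^[1 + q] s) :=
                    iter_le_iter (fun x => (lt_F d x).le) _ (by omega)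
                _ = w := hw.symm
            · -- u < t : contradiction with v < w
              exfalso
              cases ht with
              | one => omega
              | step hdg hs' hr =>
                rename_i g r s'
                -- IH on (u, t)
                have hIH := ih g f r q s' s ((F f)^[1 + q] s) ((F g)^[1 + r] s')
                  (by omega) hs' hs hr hq rfl rfl htu
                have h5 : F (d + 1) ((F f)^[1 + q] s) ≤ (F g)^[1 + r] s' :=
                  le_trans (F_base_mono (le_min hdg hdf) _) hIH
                have h6 : w < F (d + 1) ((F f)^[1 + q] s) := by
                  rw [hw]; exact iter_lt_F_succ (by omega)
                omega
          · -- d < e : contradiction with v < w via IH on (u, v)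
            exfalso
            have hIH := ih e f p q t s ((F f)^[1 + q] s) v
              (by omega) ht hs hp hq rfl hv huv
            have h5 : F (d + 1) ((F f)^[1 + q] s) ≤ v :=
              le_trans (F_base_mono (le_min hlt hdf) _) hIH
            have h6 : w < F (d + 1) ((F f)^[1 + q] s) := by
              rw [hw]; exact iter_lt_F_succ (by omega)
            omega
    · -- e < d
      rw [min_eq_right hed.le]
      have key1 : F e v ≤ F (e + 1) t := by
        rw [hv, F_succ]
        calc F e ((F e)^[1 + p] t) = (F e)^[1 + p + 1] t := (Function.iterate_succ_apply' _ _ _).symm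
          _ ≤ (F e)^[1 + t] t := iter_le_iter (fun x => (lt_F e x).le) t (by omega)
      rcases le_or_gt t u with htu | hut
      · calc F e v ≤ F (e + 1) t := key1
          _ ≤ F (e + 1) u := (F_strictMono (e + 1)).monotone htu
          _ ≤ F d u := F_base_mono hed u
          _ ≤ (F d)^[1 + n] u := F_le_iter d (1 + n) u (by omega)
          _ = w := hw.symm
      · -- u < t, so t ≥ 2 and t has a nonempty form; IH on (t, w)
        cases ht with
        | one => omega
        | step heg hs' hr =>
          rename_i g r s'
          have hIH := ih d g n r u s' ((F g)^[1 + r] s') w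
            (by omega) hu hs' hn hr rfl hw (by omega)
          calc F e v ≤ F (e + 1) ((F g)^[1 + r] s') := key1
            _ ≤ F (min d g) ((F g)^[1 + r] s') := F_base_mono (le_min hed heg) _
            _ ≤ w := hIH

lemma evalANF_concat (a : List (ℕ × ℕ)) (q : ℕ × ℕ) :
    evalANF (a ++ [q]) = (F q.1)^[1 + q.2] (evalANF a) := by
  simp [evalANF, List.foldl_append]

lemma one_le_evalANF (a : List (ℕ × ℕ)) : 1 ≤ evalANF a := by
  suffices h : ∀ (a : List (ℕ × ℕ)) (x : ℕ),
      x ≤ a.foldl (fun m p => (F p.1)^[1 + p.2] m) x from h a 1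
  intro a
  induction a with
  | nil => intro x; exact le_rfl
  | cons p a ih =>
    intro x
    exact le_trans (lt_iter' p.1 p.2 x).le (ih _)

lemma isANF_concat {a : List (ℕ × ℕ)} {q : ℕ × ℕ} (h : IsANF (a ++ [q])) :
    IsANF a ∧ q.2 < evalANF a ∧ ∀ p ∈ a, q.1 < p.1 := by
  obtain ⟨hc, he⟩ := h
  haveI : IsTrans (ℕ × ℕ) (fun p q : ℕ × ℕ => q.1 < p.1) :=
    ⟨fun a b c h1 h2 => lt_trans h2 h1⟩
  have hca : a.Chain' (fun p q => q.1 < p.1) := (List.isChain_append.mp hc).1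
  have hpw : (a ++ [q]).Pairwise (fun p q => q.1 < p.1) := List.isChain_iff_pairwise.mp hc
  refine ⟨⟨hca, ?_⟩, ?_, ?_⟩
  · intro i hi
    have hi' : i < (a ++ [q]).length := by simp; omega
    have := he i hi'
    simp only [List.get_eq_getElem] at this ⊢
    rwa [List.getElem_append_left hi, List.take_append_of_le_length (by omega)] at this
  · have hlen : a.length < (a ++ [q]).length := by simp
    have := he a.length hlen
    have hget : (a ++ [q]).get ⟨a.length, hlen⟩ = q := by
      simp [List.getElem_append_right]
    rwa [hget, List.take_left] at this
  · intro p hp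
    exact (List.pairwise_append.mp hpw).2.2 p hp q (by simp)

lemma InS_of_isANF : ∀ (a : List (ℕ × ℕ)) (c : ℕ), IsANF a → (∀ p ∈ a, c ≤ p.1) →
    InS c (evalANF a) := by
  intro a
  induction a using List.reverseRecOn with
  | nil => intro c _ _; exact InS.one c
  | append_singleton a q ih =>
    intro c h hc
    obtain ⟨ha, hq, hgt⟩ := isANF_concat h
    rw [evalANF_concat]
    exact InS.step (hc q (by simp)) (ih (q.1 + 1) ha (fun p hp => hgt p hp)) hq

lemma base_lt_false {b b' n n' v v' m : ℕ} (hbb : b < b')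
    (hm : (F b)^[1 + n] v = m) (hm' : (F b')^[1 + n'] v' = m)
    (hv : InS (b + 1) v) (hv' : InS (b' + 1) v') (hn : n < v) (hn' : n' < v') : False := by
  cases hv with
  | one =>
    have hn0 : n = 0 := by omega
    have h1 : m = F b 1 := by rw [← hm, hn0]; simp
    have h2 : F (b + 1) 1 ≤ m := by
      calc F (b + 1) 1 ≤ F b' 1 := F_base_mono (by omega) 1
        _ ≤ F b' v' := (F_strictMono b').monotone hv'.pos
        _ ≤ (F b')^[1 + n'] v' := F_le_iter b' (1 + n') v' (by omega)
        _ = m := hm'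
    have h3 : F b 1 < F (b + 1) 1 := by
      have := iter_lt_iter (lt_F b) 1 (show 1 < 1 + 1 by omega)
      simpa [F_succ] using this
    omega
  | step heb htS hp =>
    rename_i e p t
    have hvm : (F e)^[1 + p] t < m := hm ▸ lt_iter' b n _
    have hIH := gap ((F e)^[1 + p] t + m) b' e n' p v' t ((F e)^[1 + p] t) m
      le_rfl hv' htS hn' hp rfl hm'.symm hvm
    have h5 : F (b + 1) ((F e)^[1 + p] t) ≤ m :=
      le_trans (F_base_mono (le_min (by omega) heb) _) hIH
    have h6 : m < F (b + 1) ((F e)^[1 + p] t) := by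
      rw [← hm]; exact iter_lt_F_succ (by omega)
    omega

lemma base_eq_v_lt_false {b n n' v v' m : ℕ} (hvv : v < v')
    (hm : (F b)^[1 + n] v = m) (hm' : (F b)^[1 + n'] v' = m)
    (hv : InS (b + 1) v) (hv' : InS (b + 1) v') (hn : n < v) (hn' : n' < v') : False := by
  cases hv with
  | one =>
    have hn0 : n = 0 := by omega
    have h1 : m = F b 1 := by rw [← hm, hn0]; simp
    have h2 : F b 1 < m := by
      calc F b 1 < F b v' := F_strictMono b hvv
        _ ≤ (F b)^[1 + n'] v' := F_le_iter b (1 + n') v' (by omega)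
        _ = m := hm'
    omega
  | step heb htS hp =>
    rename_i e p t
    have ht1 := htS.pos
    have hvt : t < (F e)^[1 + p] t := lt_iter' e p t
    cases hv' with
    | one => omega
    | step he'b htS' hp' =>
      rename_i e' p' t'
      have hIH := gap ((F e)^[1 + p] t + (F e')^[1 + p'] t') e' e p' p t' t
        ((F e)^[1 + p] t) ((F e')^[1 + p'] t') le_rfl htS' htS hp' hp rfl rfl hvv
      have h5 : F (b + 1) ((F e)^[1 + p] t) ≤ (F e')^[1 + p'] t' :=
        le_trans (F_base_mono (le_min he'b heb) _) hIH
      have h6 : m < F (b + 1) ((F e)^[1 + p] t) := by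
        rw [← hm]; exact iter_lt_F_succ (by omega)
      have h7 : (F e')^[1 + p'] t' < m := hm' ▸ lt_iter' b n' _
      omega

lemma anf_unique_aux : ∀ (m : ℕ) (l l' : List (ℕ × ℕ)), evalANF l = m → evalANF l' = m →
    IsANF l → IsANF l' → l = l' := by
  intro m
  induction m using Nat.strong_induction_on with
  | _ m ih =>
    intro l l' hl hl' h h'
    rcases l.eq_nil_or_concat with rfl | ⟨a, q, rfl⟩
    · rcases l'.eq_nil_or_concat with rfl | ⟨a', q', rfl⟩
      · rfl
      · exfalso
        simp only [List.concat_eq_append] at hl'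
        have h1 : 1 ≤ evalANF a' := one_le_evalANF a'
        have h2 : evalANF a' < evalANF (a' ++ [q']) := by
          rw [evalANF_concat]; exact lt_iter' q'.1 q'.2 _
        have h3 : evalANF ([] : List (ℕ × ℕ)) = 1 := rfl
        omega
    · rcases l'.eq_nil_or_concat with rfl | ⟨a', q', rfl⟩
      · exfalso
        simp only [List.concat_eq_append] at hl
        have h1 : 1 ≤ evalANF a := one_le_evalANF a
        have h2 : evalANF a < evalANF (a ++ [q]) := by
          rw [evalANF_concat]; exact lt_iter' q.1 q.2 _
        have h3 : evalANF ([] : List (ℕ × ℕ)) = 1 := rfl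
        omega
      · simp only [List.concat_eq_append] at h h' hl hl' ⊢
        obtain ⟨ha, hq, hgt⟩ := isANF_concat h
        obtain ⟨ha', hq', hgt'⟩ := isANF_concat h'
        have hv : InS (q.1 + 1) (evalANF a) := InS_of_isANF a _ ha (fun p hp => hgt p hp)
        have hv' : InS (q'.1 + 1) (evalANF a') := InS_of_isANF a' _ ha' (fun p hp => hgt' p hp)
        rw [evalANF_concat] at hl hl'
        have hbb : q.1 = q'.1 := by
          rcases lt_trichotomy q.1 q'.1 with hb | hb | hb
          · exact absurd (base_lt_false hb hl hl' hv hv' hq hq') not_false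
          · exact hb
          · exact absurd (base_lt_false hb hl' hl hv' hv hq' hq) not_false
        rw [← hbb] at hl' hv'
        have hvv : evalANF a = evalANF a' := by
          rcases lt_trichotomy (evalANF a) (evalANF a') with hb | hb | hb
          · exact absurd (base_eq_v_lt_false hb hl hl' hv hv' hq hq') not_false
          · exact hb
          · exact absurd (base_eq_v_lt_false hb hl' hl hv' hv hq' hq) not_false
        rw [← hvv] at hl'
        have hnn : q.2 = q'.2 := by
          rcases lt_trichotomy q.2 q'.2 with hb | hb | hb
          · exfalso
            have := iter_lt_iter (lt_F q.1) (evalANF a) (show 1 + q.2 < 1 + q'.2 by omega)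
            omega
          · exact hb
          · exfalso
            have := iter_lt_iter (lt_F q.1) (evalANF a) (show 1 + q'.2 < 1 + q.2 by omega)
            omega
        have hvm : evalANF a < m := hl ▸ lt_iter' q.1 q.2 _
        have haa : a = a' := ih (evalANF a) hvm a a' rfl hvv.symm ha ha'
        rw [haa, show q = q' from Prod.ext hbb hnn]

theorem ackermannNormalForm_unique (l l' : List (ℕ × ℕ))
    (h : IsANF l) (h' : IsANF l') (heq : evalANF l = evalANF l') : l = l' :=
  anf_unique_aux (evalANF l') l l' heq rfl h h'
end

section
/- Ackermann normal forms compare lexicographically: if F_{b_{k-1}}^{1+n_{k-1}} ∘ ... ∘ F_{b_0}^{1+n_0}(1) and F_{b'_{l-1}}^{1+n'_{l-1}} ∘ ... ∘ F_{b'_0}^{1+n'_0}(1) are both in Ackermann normal form, then the first number is strictly less than the second if and only if the sequence ⟨(b_0,n_0),...,(b_{k-1},n_{k-1})⟩ is lexicographically less than ⟨(b'_0,n'_0),...,(b'_{l-1},n'_{l-1})⟩, where pairs are compared in the product (lexicographic) order on ℕ × ℕ, and a proper initial segment is considered smaller than its extension. -/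
namespace ANFAux

def evalFrom (m : ℕ) (l : List (ℕ × ℕ)) : ℕ :=
  l.foldl (fun m p => (F p.1)^[1 + p.2] m) m

theorem evalFrom_cons (m : ℕ) (p : ℕ × ℕ) (t : List (ℕ × ℕ)) :
    evalFrom m (p :: t) = evalFrom ((F p.1)^[1 + p.2] m) t := rfl

theorem le_iter {f : ℕ → ℕ} (hf : ∀ x, x < f x) : ∀ (k : ℕ) (x : ℕ), x ≤ f^[k] x
  | 0, _ => le_refl _
  | k + 1, x => by
    rw [Function.iterate_succ_apply]
    exact le_trans (le_of_lt (hf x)) (le_iter hf k (f x))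

theorem lt_F : ∀ b n, n < F b n := by
  intro b
  induction b with
  | zero => intro n; simp [F]
  | succ b ih =>
    intro n
    show n < (F b)^[1 + n] n
    calc n < F b n := ih n
      _ ≤ (F b)^[n] (F b n) := le_iter ih n _
      _ = (F b)^[1 + n] n := by rw [Nat.add_comm, Function.iterate_succ_apply]

theorem iter_le_iter (b : ℕ) {j k : ℕ} (h : j ≤ k) (x : ℕ) :
    (F b)^[j] x ≤ (F b)^[k] x := by
  obtain ⟨d, rfl⟩ := Nat.exists_eq_add_of_le h
  rw [Nat.add_comm, Function.iterate_add_apply]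
  exact le_iter (lt_F b) d _

theorem F_le_F {b b' : ℕ} (h : b ≤ b') (n : ℕ) : F b n ≤ F b' n := by
  induction h with
  | refl => exact le_refl _
  | step _ ih =>
    refine le_trans ih ?_
    rename_i b'' _
    show F b'' n ≤ (F b'')^[1 + n] n
    calc F b'' n = (F b'')^[1] n := rfl
      _ ≤ (F b'')^[1 + n] n := iter_le_iter b'' (by omega) n

theorem le_evalFrom (m : ℕ) (l : List (ℕ × ℕ)) : m ≤ evalFrom m l := by
  induction l generalizing m with
  | nil => exact le_refl m
  | cons p t ih =>
    rw [evalFrom_cons]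
    exact le_trans (le_iter (lt_F p.1) _ m) (ih _)

/-- Key lemma: an ANF-like tail with all indices below `b` evaluated from `m` stays below
`F b m`. -/
theorem evalFrom_lt_F (b : ℕ) (l : List (ℕ × ℕ)) (m : ℕ)
    (hpw : l.Pairwise (fun p q => q.1 < p.1))
    (hb : ∀ p ∈ l, p.1 < b)
    (hn : ∀ i (h : i < l.length), (l.get ⟨i, h⟩).2 < evalFrom m (l.take i)) :
    evalFrom m l < F b m := by
  induction l generalizing m b with
  | nil => exact lt_F b m
  | cons p t ih =>
    obtain ⟨b₁, n₁⟩ := p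
    show evalFrom ((F b₁)^[1 + n₁] m) t < F b m
    have hn₁ : n₁ < m := hn 0 (by simp)
    have hb₁ : b₁ < b := hb _ List.mem_cons_self
    rw [List.pairwise_cons] at hpw
    have h1 : evalFrom ((F b₁)^[1 + n₁] m) t < F b₁ ((F b₁)^[1 + n₁] m) :=
      ih b₁ _ hpw.2 (fun q hq => hpw.1 q hq)
        (fun i hi => hn (i + 1) (Nat.succ_lt_succ hi))
    have h2 : F b₁ ((F b₁)^[1 + n₁] m) = (F b₁)^[2 + n₁] m := by
      rw [show 2 + n₁ = (1 + n₁) + 1 by omega, Function.iterate_succ_apply']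
    have h3 : (F b₁)^[2 + n₁] m ≤ (F b₁)^[1 + m] m := iter_le_iter b₁ (by omega) m
    have h4 : (F b₁)^[1 + m] m = F (b₁ + 1) m := rfl
    have h5 : F (b₁ + 1) m ≤ F b m := F_le_F hb₁ m
    omega

theorem evalFrom_lt_of_lex {l l' : List (ℕ × ℕ)}
    (hlex : List.Lex (Prod.Lex (· < ·) (· < ·)) l l') :
    ∀ m : ℕ, l.Pairwise (fun p q => q.1 < p.1) → l'.Pairwise (fun p q => q.1 < p.1) →
    (∀ i (h : i < l.length), (l.get ⟨i, h⟩).2 < evalFrom m (l.take i)) →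
    (∀ i (h : i < l'.length), (l'.get ⟨i, h⟩).2 < evalFrom m (l'.take i)) →
    evalFrom m l < evalFrom m l' := by
  induction hlex with
  | @nil p t =>
    intro m _ _ _ _
    show m < evalFrom ((F p.1)^[1 + p.2] m) t
    calc m < F p.1 m := lt_F p.1 m
      _ = (F p.1)^[1] m := rfl
      _ ≤ (F p.1)^[1 + p.2] m := iter_le_iter p.1 (by omega) m
      _ ≤ _ := le_evalFrom _ t
  | @cons a s t _ ih =>
    intro m hpw hpw' hn hn'
    rw [List.pairwise_cons] at hpw hpw'
    show evalFrom ((F a.1)^[1 + a.2] m) s < evalFrom ((F a.1)^[1 + a.2] m) t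
    exact ih _ hpw.2 hpw'.2
      (fun i hi => hn (i + 1) (Nat.succ_lt_succ hi))
      (fun i hi => hn' (i + 1) (Nat.succ_lt_succ hi))
  | @rel p t p' t' hr =>
    intro m hpw hpw' hn hn'
    rw [List.pairwise_cons] at hpw hpw'
    cases hr with
    | @left b n b' n' hb =>
      -- b < b'
      have hA : evalFrom m ((b, n) :: t) < F b' m := by
        refine evalFrom_lt_F b' _ m (List.pairwise_cons.mpr hpw) ?_ hn
        intro q hq
        rcases List.mem_cons.mp hq with h | h
        · subst h; exact hb
        · exact lt_trans (hpw.1 q h) hb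
      have h2 : F b' m ≤ (F b')^[1 + n'] m := by
        calc F b' m = (F b')^[1] m := rfl
          _ ≤ (F b')^[1 + n'] m := iter_le_iter b' (by omega) m
      have h3 := le_evalFrom ((F b')^[1 + n'] m) t'
      show evalFrom m ((b, n) :: t) < evalFrom ((F b')^[1 + n'] m) t'
      omega
    | @right b n n' hnn =>
      -- same b, n < n'
      have hn₀ : n < m := hn 0 (by simp)
      show evalFrom ((F b)^[1 + n] m) t < evalFrom ((F b)^[1 + n'] m) t'
      have hA : evalFrom ((F b)^[1 + n] m) t < F b ((F b)^[1 + n] m) :=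
        evalFrom_lt_F b t _ hpw.2 hpw.1
          (fun i hi => hn (i + 1) (Nat.succ_lt_succ hi))
      have h2 : F b ((F b)^[1 + n] m) = (F b)^[2 + n] m := by
        rw [show 2 + n = (1 + n) + 1 by omega, Function.iterate_succ_apply']
      have h3 : (F b)^[2 + n] m ≤ (F b)^[1 + n'] m := iter_le_iter b (by omega) m
      have h4 := le_evalFrom ((F b)^[1 + n'] m) t'
      omega

theorem lex_trichotomy : ∀ a b : List (ℕ × ℕ),
    List.Lex (Prod.Lex (· < ·) (· < ·)) a b ∨ a = b ∨
      List.Lex (Prod.Lex (· < ·) (· < ·)) b a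
  | [], [] => Or.inr (Or.inl rfl)
  | [], _ :: _ => Or.inl List.Lex.nil
  | _ :: _, [] => Or.inr (Or.inr List.Lex.nil)
  | (pb, pn) :: t, (qb, qn) :: s => by
    rcases Nat.lt_trichotomy pb qb with h | rfl | h
    · exact Or.inl (List.Lex.rel (Prod.Lex.left _ _ h))
    · rcases Nat.lt_trichotomy pn qn with h | rfl | h
      · exact Or.inl (List.Lex.rel (Prod.Lex.right _ h))
      · rcases lex_trichotomy t s with h | rfl | h
        · exact Or.inl (List.Lex.cons h)
        · exact Or.inr (Or.inl rfl)
        · exact Or.inr (Or.inr (List.Lex.cons h))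
      · exact Or.inr (Or.inr (List.Lex.rel (Prod.Lex.right _ h)))
    · exact Or.inr (Or.inr (List.Lex.rel (Prod.Lex.left _ _ h)))

end ANFAux

open ANFAux in
theorem ackermannNormalForm_lt_iff_lex (l l' : List (ℕ × ℕ))
    (h : IsANF l) (h' : IsANF l') :
    evalANF l < evalANF l' ↔
      List.Lex (Prod.Lex (· < ·) (· < ·)) l l' := by
  obtain ⟨hc, hn⟩ := h
  obtain ⟨hc', hn'⟩ := h'
  haveI : IsTrans (ℕ × ℕ) (fun p q : ℕ × ℕ => q.1 < p.1) :=
    ⟨fun _ _ _ h1 h2 => lt_trans h2 h1⟩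
  have hpw := List.isChain_iff_pairwise.mp hc
  have hpw' := List.isChain_iff_pairwise.mp hc'
  have hn₂ : ∀ i (hi : i < l.length), (l.get ⟨i, hi⟩).2 < evalFrom 1 (l.take i) := hn
  have hn₂' : ∀ i (hi : i < l'.length), (l'.get ⟨i, hi⟩).2 < evalFrom 1 (l'.take i) := hn'
  constructor
  · intro hlt
    rcases lex_trichotomy l l' with h1 | h1 | h1
    · exact h1
    · subst h1; exact absurd hlt (lt_irrefl _)
    · have h2 := evalFrom_lt_of_lex h1 1 hpw' hpw hn₂' hn₂
      have e1 : evalANF l = evalFrom 1 l := rfl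
      have e2 : evalANF l' = evalFrom 1 l' := rfl
      omega
  · intro hlex
    have e1 : evalANF l = evalFrom 1 l := rfl
    have e2 : evalANF l' = evalFrom 1 l' := rfl
    have := evalFrom_lt_of_lex hlex 1 hpw hpw' hn₂ hn₂'
    omega
end
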